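/- Let R be a subset of a separable Hilbert space H, and suppose there exist a measure μ on R and a measurable map T : R → G_k(H) such that for every k-dimensional subspace V ≤ H and every Borel A ⊆ R, ∫ #(π_V⁻¹(y) ∩ A) dH^k(y) = ∫_A det(π_V | T(x)) dμ(x). Then μ(A) ≤ H^k(A) for every Borel A ⊆ R. -/

import Mathlib

open MeasureTheory Module Set
open scoped ENNReal RealInnerProductSpace

noncomputable section

/-- The Grassmannian of `k`-dimensional subspaces of a real inner product space. -/
structure Grassmannian (k : ℕ) (H : Type*) [NormedAddCommGroup H]
    [InnerProductSpace ℝ H] where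
  toSubmodule : Submodule ℝ H
  fin : FiniteDimensional ℝ toSubmodule
  rank : Module.finrank ℝ toSubmodule = k

variable {H : Type*} [NormedAddCommGroup H] [InnerProductSpace ℝ H]

/-- Orthogonal projection onto an element of the Grassmannian, as a map `H → H`. -/
def Grassmannian.proj {k : ℕ} (V : Grassmannian k H) : H →L[ℝ] H :=
  letI := V.fin
  V.toSubmodule.subtypeL.comp (Submodule.orthogonalProjectionOnto V.toSubmodule)

instance {k : ℕ} : MeasurableSpace (Grassmannian k H) :=
  MeasurableSpace.comap (fun V : Grassmannian k H => V.proj) (borel (H →L[ℝ] H))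

/-- The metric determinant of the restriction of a bounded linear map to a
finite-dimensional subspace. -/
def mdet {H₁ H₂ : Type*} [NormedAddCommGroup H₁] [InnerProductSpace ℝ H₁]
    [NormedAddCommGroup H₂] [InnerProductSpace ℝ H₂]
    {k : ℕ} (L : H₁ →L[ℝ] H₂) (W : Grassmannian k H₁) : ℝ :=
  letI := W.fin
  Real.sqrt (Matrix.det (Matrix.of fun i j : Fin (Module.finrank ℝ W.toSubmodule) =>
    ⟪L ((stdOrthonormalBasis ℝ W.toSubmodule) i : H₁),
      L ((stdOrthonormalBasis ℝ W.toSubmodule) j : H₁)⟫))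

lemma Grassmannian.proj_lipschitz {k : ℕ} (V : Grassmannian k H) : LipschitzWith 1 V.proj := by
  letI := V.fin
  refine LipschitzWith.of_dist_le_mul fun x y => ?_
  simp only [NNReal.coe_one, one_mul, dist_eq_norm, ← map_sub]
  show ‖(Submodule.orthogonalProjectionOnto V.toSubmodule (x - y) : H)‖ ≤ ‖x - y‖
  calc ‖(Submodule.orthogonalProjectionOnto V.toSubmodule (x - y) : H)‖
      ≤ ‖Submodule.orthogonalProjectionOnto V.toSubmodule‖ * ‖x - y‖ :=
        (Submodule.orthogonalProjectionOnto V.toSubmodule).le_opNorm _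
    _ ≤ 1 * ‖x - y‖ := by gcongr; exact Submodule.orthogonalProjectionOnto_norm_le _
    _ = ‖x - y‖ := one_mul _

lemma exists_partition [MeasurableSpace H] [BorelSpace H] [SecondCountableTopology H] (m : ℕ) :
    ∃ E : ℕ → Set H, (∀ j, MeasurableSet (E j)) ∧
      Pairwise (Function.onFun Disjoint E) ∧
      (⋃ j, E j) = univ ∧ ∀ j, EMetric.diam (E j) ≤ ((m : ℝ≥0∞) + 1)⁻¹ := by
  rcases isEmpty_or_nonempty H with hH | hH
  · refine ⟨fun _ => ∅, by simp, by intro i j _; simp [Function.onFun], ?_,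
      by intro j; show Metric.ediam (∅ : Set H) ≤ _; simp⟩
    rw [Set.univ_eq_empty_iff.2 hH]; simp
  · classical
    obtain ⟨u, hu⟩ := TopologicalSpace.exists_dense_seq H
    set r : ℝ≥0∞ := (2 * ((m : ℝ≥0∞) + 1))⁻¹ with hr
    have h2m : (2 * ((m : ℝ≥0∞) + 1)) ≠ ⊤ := by finiteness
    have h2m0 : (2 * ((m : ℝ≥0∞) + 1)) ≠ 0 := by simp
    have hr0 : 0 < r := ENNReal.inv_pos.2 h2m
    have hrt : r ≠ ⊤ := by simp [hr, h2m0]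
    refine ⟨fun j => Metric.eball (u j) r \ ⋃ i < j, Metric.eball (u i) r, ?_, ?_, ?_, ?_⟩
    · intro j
      exact (Metric.isOpen_eball.measurableSet).diff
        (MeasurableSet.biUnion (Set.to_countable _)
          (fun i _ => Metric.isOpen_eball.measurableSet))
    · intro i j hij
      rcases hij.lt_or_gt with h | h
      · refine Set.disjoint_left.2 fun x hxi hxj => ?_
        exact hxj.2 (Set.mem_biUnion h hxi.1)
      · refine Set.disjoint_left.2 fun x hxi hxj => ?_
        exact hxi.2 (Set.mem_biUnion h hxj.1)
    · ext x
      simp only [Set.mem_univ, iff_true, Set.mem_iUnion]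
      have hex : ∃ j, x ∈ Metric.eball (u j) r := by
        have hpos : (0 : ℝ) < r.toReal := ENNReal.toReal_pos hr0.ne' hrt
        obtain ⟨j, hj⟩ := hu.exists_dist_lt x hpos
        refine ⟨j, ?_⟩
        rw [Metric.mem_eball, edist_dist, ← ENNReal.ofReal_toReal hrt]
        exact (ENNReal.ofReal_lt_ofReal_iff hpos).2 hj
      refine ⟨Nat.find hex, Nat.find_spec hex, ?_⟩
      simp only [Set.mem_iUnion]
      rintro ⟨i, hi, hxi⟩
      exact Nat.find_min hex hi hxi
    · intro j
      refine le_trans (EMetric.diam_mono Set.diff_subset) (le_trans EMetric.diam_ball ?_)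
      rw [hr, ENNReal.mul_inv (Or.inl two_ne_zero) (Or.inl (by norm_num)), ← mul_assoc,
        ENNReal.mul_inv_cancel two_ne_zero (by norm_num), one_mul]

lemma exists_dense_family [SecondCountableTopology H] {k : ℕ} (V₀ : Grassmannian k H)
    {δ : ℝ} (hδ : 0 < δ) :
    ∃ W : ℕ → Grassmannian k H, ∀ V : Grassmannian k H, ∃ n, ‖V.proj - (W n).proj‖ < δ := by
  classical
  set Φ : (Fin k → H) → (H →L[ℝ] H) := fun v =>
    ∑ i, ContinuousLinearMap.smulRightL ℝ H H (innerSL ℝ (v i)) (v i) with hΦdef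
  have hΦ : Continuous Φ := by
    refine continuous_finset_sum _ fun i _ => ?_
    have h1 : Continuous fun p : (H →L[ℝ] ℝ) × H =>
        ContinuousLinearMap.smulRightL ℝ H H p.1 p.2 :=
      (ContinuousLinearMap.smulRightL ℝ H H).isBoundedBilinearMap.continuous
    exact h1.comp (((innerSL ℝ).continuous.comp (continuous_apply i)).prodMk
      (continuous_apply i))
  have hrange : ∀ V : Grassmannian k H, V.proj ∈ Set.range Φ := by
    intro V
    letI := V.fin
    haveI : CompleteSpace V.toSubmodule := FiniteDimensional.complete ℝ _
    set b := (stdOrthonormalBasis ℝ V.toSubmodule).reindex (finCongr V.rank) with hb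
    refine ⟨fun i => (b i : H), ?_⟩
    ext x
    have hsum := b.orthogonalProjectionOnto_apply_eq_sum x
    have hcoe : (Submodule.orthogonalProjectionOnto V.toSubmodule x : H)
        = ∑ i, ⟪(b i : H), x⟫ • (b i : H) := by
      rw [hsum]
      push_cast
      simp
    show (∑ i, ContinuousLinearMap.smulRightL ℝ H H (innerSL ℝ ((b i : H))) ((b i : H))) x
        = V.proj x
    have : V.proj x = (Submodule.orthogonalProjectionOnto V.toSubmodule x : H) := rfl
    rw [this, hcoe, ContinuousLinearMap.sum_apply]
    exact Finset.sum_congr rfl fun i _ => rfl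
  have hsep : TopologicalSpace.IsSeparable (Set.range fun V : Grassmannian k H => V.proj) := by
    refine (TopologicalSpace.isSeparable_range hΦ).mono ?_
    rintro _ ⟨V, rfl⟩
    exact hrange V
  obtain ⟨c, hc, hcc⟩ := hsep
  obtain ⟨u, hu⟩ := (hc.insert V₀.proj).exists_eq_range (Set.insert_nonempty _ _)
  refine ⟨fun n => if h : ∃ V : Grassmannian k H, dist V.proj (u n) < δ / 2
    then h.choose else V₀, fun V => ?_⟩
  have hmem : V.proj ∈ closure (insert V₀.proj c) :=
    closure_mono (Set.subset_insert _ _) (hcc ⟨V, rfl⟩)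
  obtain ⟨p, hp, hdist⟩ := Metric.mem_closure_iff.1 hmem (δ / 2) (half_pos hδ)
  rw [hu] at hp
  obtain ⟨n, rfl⟩ := hp
  have hex : ∃ V' : Grassmannian k H, dist V'.proj (u n) < δ / 2 := ⟨V, hdist⟩
  refine ⟨n, ?_⟩
  have hWn : dist (if h : ∃ V' : Grassmannian k H, dist V'.proj (u n) < δ / 2
      then h.choose else V₀).proj (u n) < δ / 2 := by
    rw [dif_pos hex]; exact hex.choose_spec
  rw [← dist_eq_norm]
  calc dist V.proj (if h : ∃ V' : Grassmannian k H, dist V'.proj (u n) < δ / 2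
        then h.choose else V₀).proj
      ≤ dist V.proj (u n) + dist (if h : ∃ V' : Grassmannian k H, dist V'.proj (u n) < δ / 2
        then h.choose else V₀).proj (u n) := dist_triangle_right _ _ _
    _ < δ / 2 + δ / 2 := add_lt_add hdist hWn
    _ = δ := add_halves δ

lemma exists_delta_mdet (k : ℕ) {ε : ℝ} (hε : 0 < ε) (hε1 : ε ≤ 1) :
    ∃ δ : ℝ, 0 < δ ∧ ∀ (V W : Grassmannian k H), ‖W.proj - V.proj‖ < δ →
      1 - ε ≤ mdet W.proj V := by
  classical
  letI : SeminormedAddCommGroup (Matrix (Fin k) (Fin k) ℝ) := Matrix.seminormedAddCommGroup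
  have hcont : ContinuousAt (fun M : Matrix (Fin k) (Fin k) ℝ => M.det) 1 :=
    (continuous_id.matrix_det).continuousAt
  obtain ⟨δ₁, hδ₁, hdet⟩ := Metric.continuousAt_iff.1 hcont ε hε
  refine ⟨min (δ₁ / 4) 1, by positivity, ?_⟩
  intro V W hVW
  set δ : ℝ := min (δ₁ / 4) 1 with hδdef
  have hδ0 : 0 < δ := by positivity
  have hδ1 : δ ≤ 1 := min_le_right _ _
  letI := V.fin
  haveI : CompleteSpace V.toSubmodule := FiniteDimensional.complete ℝ _
  set e := stdOrthonormalBasis ℝ V.toSubmodule with he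
  set M₀ : Matrix (Fin (finrank ℝ V.toSubmodule)) (Fin (finrank ℝ V.toSubmodule)) ℝ :=
    Matrix.of (fun i j => ⟪W.proj (e i : H), W.proj (e j : H)⟫) with hM₀
  have hmdet : mdet W.proj V = Real.sqrt M₀.det := rfl
  set ee := finCongr V.rank with hee
  set M : Matrix (Fin k) (Fin k) ℝ := Matrix.reindex ee ee M₀ with hM
  have hMdet : M.det = M₀.det := Matrix.det_reindex_self _ _
  have hentry : ∀ i j, |M₀ i j - (if i = j then (1:ℝ) else 0)| ≤ 3 * δ := by
    intro i j
    have hVe : ∀ i, V.proj ((e i : H)) = (e i : H) := by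
      intro i
      show (↑(Submodule.orthogonalProjectionOnto V.toSubmodule (e i : H)) : H) = (e i : H)
      rw [Submodule.orthogonalProjectionOnto_mem_subspace_eq_self]
    have hnorm1 : ∀ i, ‖(e i : H)‖ = 1 := fun i => e.orthonormal.1 i
    set u : Fin (finrank ℝ V.toSubmodule) → H := fun i => W.proj (e i : H) - (e i : H) with hu
    have hub : ∀ i, ‖u i‖ ≤ δ := by
      intro i
      have h1 : u i = (W.proj - V.proj) (e i : H) := by
        simp [hu, ContinuousLinearMap.sub_apply, hVe i]
      rw [h1]
      calc ‖(W.proj - V.proj) (e i : H)‖ ≤ ‖W.proj - V.proj‖ * ‖(e i : H)‖ :=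
            (W.proj - V.proj).le_opNorm _
        _ ≤ δ * 1 := by
            refine mul_le_mul hVW.le (le_of_eq (hnorm1 i)) (norm_nonneg _) hδ0.le
        _ = δ := mul_one δ
    have hinner : ⟪(e i : H), (e j : H)⟫ = if i = j then (1:ℝ) else 0 := by
      have h1 := orthonormal_iff_ite.1 e.orthonormal i j
      simpa [Submodule.coe_inner] using h1
    have hsplit : M₀ i j - (if i = j then (1:ℝ) else 0)
        = ⟪(e i : H), u j⟫ + ⟪u i, (e j : H)⟫ + ⟪u i, u j⟫ := by
      have h2 : M₀ i j = ⟪(e i : H) + u i, (e j : H) + u j⟫ := by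
        simp [hM₀, hu]
      rw [h2, inner_add_left, inner_add_right, inner_add_right, hinner]
      ring
    rw [hsplit]
    have h1 : |⟪(e i : H), u j⟫| ≤ δ := by
      refine le_trans (abs_real_inner_le_norm _ _) ?_
      rw [hnorm1 i, one_mul]; exact hub j
    have h2 : |⟪u i, (e j : H)⟫| ≤ δ := by
      refine le_trans (abs_real_inner_le_norm _ _) ?_
      rw [hnorm1 j, mul_one]; exact hub i
    have h3 : |⟪u i, u j⟫| ≤ δ := by
      refine le_trans (abs_real_inner_le_norm _ _) ?_
      calc ‖u i‖ * ‖u j‖ ≤ δ * 1 :=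
            mul_le_mul (hub i) ((hub j).trans hδ1) (norm_nonneg _) hδ0.le
        _ = δ := mul_one δ
    calc |⟪(e i : H), u j⟫ + ⟪u i, (e j : H)⟫ + ⟪u i, u j⟫|
        ≤ |⟪(e i : H), u j⟫| + |⟪u i, (e j : H)⟫| + |⟪u i, u j⟫| := abs_add_three _ _ _
      _ ≤ 3 * δ := by linarith
  have hdist : dist M (1 : Matrix (Fin k) (Fin k) ℝ) < δ₁ := by
    rw [dist_eq_norm]
    have h3δ : 3 * δ < δ₁ := by
      have : δ ≤ δ₁ / 4 := min_le_left _ _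
      linarith
    refine lt_of_le_of_lt ((Matrix.norm_le_iff (by positivity)).2 fun i j => ?_) h3δ
    have h1 := hentry (ee.symm i) (ee.symm j)
    have h2 : (M - 1) i j = M₀ (ee.symm i) (ee.symm j) - (if i = j then (1:ℝ) else 0) := by
      simp only [Matrix.sub_apply, Matrix.one_apply, hM, Matrix.reindex_apply,
        Matrix.submatrix_apply]
    rw [Real.norm_eq_abs, h2]
    have h4 : ((ee.symm i = ee.symm j) ↔ (i = j)) := Equiv.apply_eq_iff_eq _
    simp only [← h4] at h1 ⊢
    exact h1
  have hge : 1 - ε ≤ M₀.det := by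
    have h5 := hdet hdist
    rw [show Matrix.det (1 : Matrix (Fin k) (Fin k) ℝ) = 1 from Matrix.det_one] at h5
    rw [Real.dist_eq] at h5
    have := (abs_lt.1 h5).1
    rw [hMdet] at this
    linarith
  rw [hmdet]
  have h0 : 0 ≤ 1 - ε := by linarith
  calc 1 - ε = Real.sqrt ((1 - ε) ^ 2) := (Real.sqrt_sq h0).symm
    _ ≤ Real.sqrt M₀.det := Real.sqrt_le_sqrt (by nlinarith)

variable [MeasurableSpace H] [BorelSpace H]

/-- The integral over the `k`-plane `V` of the fiber-counting function of the orthogonal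
projection onto `V`, intersected with `A`, w.r.t. `k`-dimensional Hausdorff measure. -/
def projCount (k : ℕ) (V : Grassmannian k H) (A : Set H) : ℝ≥0∞ :=
  ∫⁻ y in (V.toSubmodule : Set H), ((V.proj ⁻¹' {y} ∩ A).encard : ℝ≥0∞) ∂(μH[(k : ℝ)])

lemma projCount_le_hausdorff [SecondCountableTopology H] {k : ℕ} (V : Grassmannian k H)
    {B : Set H} (hB : MeasurableSet B) : projCount k V B ≤ μH[(k : ℝ)] B := by
  classical
  set ν : Measure H := (μH[(k : ℝ)] : Measure H).restrict (V.toSubmodule : Set H) with hν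
  choose E hEmeas hEdisj hEcov hEdiam using fun m => exists_partition (H := H) m
  set C : ℕ → ℕ → Set H := fun m j => toMeasurable ν (V.proj '' (B ∩ E m j)) with hC
  set g : ℕ → H → ℝ≥0∞ := fun m y => ∑' j, (C m j).indicator (fun _ => (1 : ℝ≥0∞)) y with hg
  have hgmeas : ∀ m, Measurable (g m) := fun m =>
    Measurable.ennreal_tsum fun j => measurable_const.indicator (measurableSet_toMeasurable _ _)
  have hpt : ∀ y : H, ((V.proj ⁻¹' {y} ∩ B).encard : ℝ≥0∞) ≤
      Filter.atTop.liminf fun m => g m y := by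
    intro y
    refine le_of_forall_lt_imp_le_of_dense fun b hb => ?_
    obtain ⟨N, hbN, hNcard⟩ : ∃ N : ℕ, b < N ∧ (N : ℕ∞) ≤ (V.proj ⁻¹' {y} ∩ B).encard := by
      rcases eq_or_ne ((V.proj ⁻¹' {y} ∩ B).encard) ⊤ with htop | hfin
      · obtain ⟨N, hN⟩ := ENNReal.exists_nat_gt (hb.trans_le le_top).ne
        exact ⟨N, hN, htop ▸ le_top⟩
      · obtain ⟨n, hn⟩ := WithTop.ne_top_iff_exists.1 hfin
        refine ⟨n, ?_, hn.le⟩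
        rw [← hn] at hb
        exact lt_of_lt_of_eq hb (ENat.toENNReal_coe n)
    obtain ⟨F, hFsub, hFcard⟩ := Set.exists_subset_encard_eq hNcard
    have hFfin : F.Finite := Set.finite_of_encard_eq_coe hFcard
    have hFtcard : hFfin.toFinset.card = N := by
      have h1 := hFfin.encard_eq_coe_toFinset_card
      rw [hFcard] at h1
      exact_mod_cast h1.symm
    set δ₀ : ℝ≥0∞ := hFfin.toFinset.offDiag.inf (fun p => edist p.1 p.2) with hδ₀
    have hδ₀pos : 0 < δ₀ := by
      rw [hδ₀, Finset.lt_inf_iff (by simp : (0:ℝ≥0∞) < ⊤)]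
      rintro ⟨x, x'⟩ hp
      exact edist_pos.2 (Finset.mem_offDiag.1 hp).2.2
    obtain ⟨M, hM⟩ := ENNReal.exists_inv_nat_lt hδ₀pos.ne'
    refine Filter.le_liminf_of_le (by isBoundedDefault) ?_
    filter_upwards [Filter.eventually_ge_atTop M] with m hm
    have hdm : ((m : ℝ≥0∞) + 1)⁻¹ < δ₀ := by
      refine lt_of_le_of_lt (ENNReal.inv_le_inv.2 ?_) hM
      exact_mod_cast le_trans (Nat.cast_le.2 hm) (le_add_of_nonneg_right zero_le_one)
    have hcov : ∀ x : H, ∃ j, x ∈ E m j := by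
      intro x
      have hx : x ∈ ⋃ j, E m j := (hEcov m).symm ▸ Set.mem_univ x
      exact Set.mem_iUnion.1 hx
    choose jf hjf using hcov
    have hinj : Set.InjOn jf F := by
      intro x hx x' hx' hxx
      by_contra hne
      have h1 : edist x x' ≤ EMetric.diam (E m (jf x)) :=
        EMetric.edist_le_diam_of_mem (hjf x) (hxx ▸ hjf x')
      have h2 : δ₀ ≤ edist x x' := Finset.inf_le (b := (x, x'))
        (Finset.mem_offDiag.2 ⟨hFfin.mem_toFinset.2 hx, hFfin.mem_toFinset.2 hx', hne⟩)
      exact absurd (h2.trans (h1.trans (hEdiam m _))) (not_le.2 hdm)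
    refine le_trans hbN.le ?_
    have hinj' : Set.InjOn jf hFfin.toFinset := by
      intro a ha b hb' hab
      exact hinj (hFfin.mem_toFinset.1 ha) (hFfin.mem_toFinset.1 hb') hab
    calc (N : ℝ≥0∞) = ((hFfin.toFinset.image jf).card : ℝ≥0∞) := by
          rw [Finset.card_image_of_injOn hinj', hFtcard]
      _ = ∑ j ∈ hFfin.toFinset.image jf, (1 : ℝ≥0∞) := by simp
      _ ≤ ∑ j ∈ hFfin.toFinset.image jf, (C m j).indicator (fun _ => (1 : ℝ≥0∞)) y := by
          refine Finset.sum_le_sum fun j hj => ?_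
          obtain ⟨x, hx, rfl⟩ := Finset.mem_image.1 hj
          have hxF : x ∈ F := hFfin.mem_toFinset.1 hx
          have hxS := hFsub hxF
          have hxy : V.proj x = y := hxS.1
          have hmem : y ∈ C m (jf x) := subset_toMeasurable _ _ ⟨x, ⟨hxS.2, hjf x⟩, hxy⟩
          rw [Set.indicator_of_mem hmem]
      _ ≤ g m y := ENNReal.sum_le_tsum _
  have hint : ∀ m, ∫⁻ y, g m y ∂ν ≤ μH[(k : ℝ)] B := by
    intro m
    rw [hg]
    rw [lintegral_tsum (fun j =>
      (measurable_const.indicator (measurableSet_toMeasurable _ _)).aemeasurable)]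
    have hlip := Grassmannian.proj_lipschitz V
    calc ∑' j, ∫⁻ y, (C m j).indicator (fun _ => (1:ℝ≥0∞)) y ∂ν
        = ∑' j, ν (C m j) := by
          congr 1; ext j; exact lintegral_indicator_one (measurableSet_toMeasurable _ _)
      _ = ∑' j, ν (V.proj '' (B ∩ E m j)) := by
          congr 1; ext j; exact measure_toMeasurable _
      _ ≤ ∑' j, μH[(k : ℝ)] (B ∩ E m j) := by
          refine ENNReal.tsum_le_tsum fun j => ?_
          refine le_trans (Measure.restrict_apply_le _ _) ?_
          have := hlip.hausdorffMeasure_image_le (d := (k : ℝ)) (Nat.cast_nonneg k) (B ∩ E m j)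
          simpa using this
      _ = μH[(k : ℝ)] (⋃ j, B ∩ E m j) := by
          refine (measure_iUnion ?_ (fun j => hB.inter (hEmeas m j))).symm
          exact fun i j hij => ((hEdisj m) hij).mono inter_subset_right inter_subset_right
      _ = μH[(k : ℝ)] B := by rw [← Set.inter_iUnion, hEcov m, Set.inter_univ]
  calc projCount k V B
      = ∫⁻ y, ((V.proj ⁻¹' {y} ∩ B).encard : ℝ≥0∞) ∂ν := rfl
    _ ≤ ∫⁻ y, (Filter.atTop.liminf fun m => g m y) ∂ν := lintegral_mono hpt
    _ ≤ Filter.atTop.liminf (fun m => ∫⁻ y, g m y ∂ν) := lintegral_liminf_le hgmeas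
    _ ≤ μH[(k : ℝ)] B := Filter.liminf_le_of_frequently_le'
        (Filter.Frequently.of_forall hint)

/-- **The candidate measure is dominated by Hausdorff measure.**
If a pair `(μ, T)` satisfies the projection change-of-variables identity on `R ⊆ H`,
then `μ(A) ≤ H^k(A)` for every measurable `A ⊆ R`. -/
theorem mu_le_hausdorff
    [CompleteSpace H] [SecondCountableTopology H]
    (k : ℕ) (R : Set H) (μ : Measure H) (T : H → Grassmannian k H) (hT : Measurable T)
    (h : ∀ V : Grassmannian k H, ∀ A ⊆ R, MeasurableSet A →
      projCount k V A = ∫⁻ x in A, ENNReal.ofReal (mdet V.proj (T x)) ∂μ) :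
    ∀ A ⊆ R, MeasurableSet A → μ A ≤ μH[(k : ℝ)] A := by
  classical
  intro A hAR hA
  rcases isEmpty_or_nonempty H with hH | hH
  · have hAe : A = ∅ := Set.eq_empty_of_isEmpty A
    simp [hAe]
  · obtain ⟨x₀⟩ := hH
    refine ENNReal.le_of_forall_lt_one_mul_le fun a ha => ?_
    rcases eq_or_ne a 0 with rfl | ha0
    · simp
    have hat : a ≠ ⊤ := (ha.trans_le le_top).ne
    set ε : ℝ := 1 - a.toReal with hεdef
    have haR : a.toReal < 1 := by
      have h1 := (ENNReal.toReal_lt_toReal hat ENNReal.one_ne_top).2 ha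
      simpa using h1
    have hε0 : 0 < ε := by rw [hεdef]; linarith
    have hε1 : ε ≤ 1 := by
      have h2 := ENNReal.toReal_nonneg (a := a)
      rw [hεdef]; linarith
    obtain ⟨δ, hδ0, hdet⟩ := exists_delta_mdet (H := H) k hε0 hε1
    obtain ⟨W, hW⟩ := exists_dense_family (T x₀) hδ0
    set Bn : ℕ → Set H := fun n =>
      T ⁻¹' {V : Grassmannian k H | V.proj ∈ Metric.ball (W n).proj δ} with hBn
    have hBnm : ∀ n, MeasurableSet (Bn n) := by
      intro n
      refine hT ?_
      have hopen : IsOpen (Metric.ball (W n).proj δ) := Metric.isOpen_ball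
      exact MeasurableSpace.measurableSet_comap.2
        ⟨Metric.ball (W n).proj δ,
         MeasurableSpace.measurableSet_generateFrom hopen, rfl⟩
    set An : ℕ → Set H := fun n => (A ∩ Bn n) \ ⋃ i < n, Bn i with hAn
    have hAnm : ∀ n, MeasurableSet (An n) := fun n =>
      ((hA.inter (hBnm n)).diff
        (MeasurableSet.biUnion (Set.to_countable _) fun i _ => hBnm i))
    have hmemB : ∀ x, ∃ n, x ∈ Bn n := by
      intro x
      obtain ⟨n, hn⟩ := hW (T x)
      refine ⟨n, ?_⟩
      simp only [hBn, Set.mem_preimage, Set.mem_setOf_eq, Metric.mem_ball, dist_eq_norm]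
      exact hn
    have hAcover : A = ⋃ n, An n := by
      ext x
      simp only [Set.mem_iUnion]
      constructor
      · intro hx
        have hex := hmemB x
        refine ⟨Nat.find hex, ⟨⟨hx, Nat.find_spec hex⟩, ?_⟩⟩
        simp only [Set.mem_iUnion]
        rintro ⟨i, hi, hxi⟩
        exact Nat.find_min hex hi hxi
      · rintro ⟨n, hn⟩
        exact hn.1.1
    have hdisj : Pairwise (Function.onFun Disjoint An) := by
      intro i j hij
      rcases hij.lt_or_gt with hlt | hlt
      · refine Set.disjoint_left.2 fun x hxi hxj => ?_
        exact hxj.2 (Set.mem_biUnion hlt hxi.1.2)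
      · refine Set.disjoint_left.2 fun x hxi hxj => ?_
        exact hxi.2 (Set.mem_biUnion hlt hxj.1.2)
    have hkey : ∀ n, a * μ (An n) ≤ μH[(k : ℝ)] (An n) := by
      intro n
      have hAnR : An n ⊆ R := fun x hx => hAR hx.1.1
      have haof : a = ENNReal.ofReal (1 - ε) := by
        rw [hεdef, sub_sub_cancel, ENNReal.ofReal_toReal hat]
      calc a * μ (An n) = ∫⁻ _ in An n, a ∂μ := (setLIntegral_const _ _).symm
        _ ≤ ∫⁻ x in An n, ENNReal.ofReal (mdet (W n).proj (T x)) ∂μ := by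
            refine lintegral_mono_ae ?_
            refine ae_restrict_of_forall_mem (hAnm n) fun x hx => ?_
            have hxB : x ∈ Bn n := hx.1.2
            have hdb : ‖(W n).proj - (T x).proj‖ < δ := by
              have h3 : ‖(T x).proj - (W n).proj‖ < δ := by
                simpa only [hBn, Set.mem_preimage, Set.mem_setOf_eq, Metric.mem_ball,
                  dist_eq_norm] using hxB
              rw [norm_sub_rev]
              exact h3
            have hm := hdet (T x) (W n) hdb
            rw [haof]
            exact ENNReal.ofReal_le_ofReal hm
        _ = projCount k (W n) (An n) := (h (W n) (An n) hAnR (hAnm n)).symm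
        _ ≤ μH[(k : ℝ)] (An n) := projCount_le_hausdorff _ (hAnm n)
    calc a * μ A = a * ∑' n, μ (An n) := by rw [hAcover, measure_iUnion hdisj hAnm]
      _ = ∑' n, a * μ (An n) := ENNReal.tsum_mul_left.symm
      _ ≤ ∑' n, μH[(k : ℝ)] (An n) := ENNReal.tsum_le_tsum hkey
      _ = μH[(k : ℝ)] (⋃ n, An n) := (measure_iUnion hdisj hAnm).symm
      _ = μH[(k : ℝ)] A := by rw [← hAcover]

end
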